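/- Suppose f ∈ K[X,X⁻¹] satisfies equation (★) and the support of f is contained in the strictly positive integers (f has only positive powers of X). Then there exists a natural number d ≥ 0 such that f is one of: −u·X^{2d+1} − R_d; v·X^{2d+1} − R_d; Q·X^{2d} − R_d; −X^{2d} − R_d. -/

import Mathlib

open LaurentPolynomial

/-- Equation (★): `(X² − 1)·f·f∨ = b·(X²·f∨ − f) − c·(X·f − X·f∨) + Q·(X² − 1)`,
where `Q = u·v`, `c = u − v`, `b = Q − 1` and `f∨` is the image of `f` under the
`K`-algebra involution of `K[X,X⁻¹]` sending `X` to `X⁻¹`. -/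
def SatStar {K : Type*} [Field K] (u v : K) (f : K[T;T⁻¹]) : Prop :=
  (T 2 - 1) * (f * invert f) =
    C (u * v - 1) * (T 2 * invert f - f)
      - C (u - v) * (T 1 * f - T 1 * invert f)
      + C (u * v) * (T 2 - 1)

/-- `R_d = Σ_{j=1}^{d} (b·X^{2j} + c·X^{2j−1})`. -/
noncomputable def Rpoly {K : Type*} [Field K] (u v : K) (d : ℕ) : K[T;T⁻¹] :=
  ∑ j ∈ Finset.range d, (C (u * v - 1) * T (2 * (j : ℤ) + 2) + C (u - v) * T (2 * (j : ℤ) + 1))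

namespace Stmt9

variable {K : Type*} [Field K]

instance coeFunLaurent : CoeFun K[T;T⁻¹] (fun _ => ℤ → K) := ⟨fun f => f.coeff⟩

lemma C_mul_app (a : K) (h : K[T;T⁻¹]) (k : ℤ) : (C a * h) k = a * h k := by
  rw [← single_eq_C]
  exact AddMonoidAlgebra.coeff_single_zero_mul h a k

lemma T_mul_app (n : ℤ) (h : K[T;T⁻¹]) (k : ℤ) : (T n * h : K[T;T⁻¹]) k = h (k - n) := by
  have : (T n : K[T;T⁻¹]) = AddMonoidAlgebra.single n 1 := rfl
  rw [this, AddMonoidAlgebra.coeff_single_mul_apply, one_mul]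
  ring_nf

lemma sub_app (a b : K[T;T⁻¹]) (k : ℤ) : (a - b) k = a k - b k := rfl

lemma add_app (a b : K[T;T⁻¹]) (k : ℤ) : (a + b) k = a k + b k := rfl

lemma one_app (k : ℤ) : (1 : K[T;T⁻¹]) k = if 0 = k then 1 else 0 := by
  rw [← T_zero, T_apply]

lemma mul_app (f g : K[T;T⁻¹]) (k : ℤ) :
    (f * g) k = ∑ a ∈ f.coeff.support, f a * g (k - a) := by
  rw [AddMonoidAlgebra.coeff_mul_apply_left, Finsupp.sum]
  refine Finset.sum_congr rfl fun a _ => ?_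
  rw [neg_add_eq_sub]

lemma star_shift (u v : K) (g : K[T;T⁻¹]) :
    SatStar u v (T 2 * g - C (u * v - 1) * T 2 - C (u - v) * T 1) ↔ SatStar u v g := by
  have hst : (T 1 : K[T;T⁻¹]) * T (-1) = 1 := by
    rw [← T_add]; norm_num
  have h2 : (T 2 : K[T;T⁻¹]) = T 1 * T 1 := by rw [← T_add]; norm_num
  have h2' : (T (-2) : K[T;T⁻¹]) = T (-1) * T (-1) := by rw [← T_add]; norm_num
  unfold SatStar
  simp only [map_sub, map_mul, map_one, invert_T, invert_C]
  rw [h2, h2']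
  set t : K[T;T⁻¹] := T 1
  set s : K[T;T⁻¹] := T (-1)
  set G : K[T;T⁻¹] := invert g
  set U : K[T;T⁻¹] := C u
  set V : K[T;T⁻¹] := C v
  constructor <;> intro h
  · linear_combination h - (- g + g * U * V - g * G + t * V - t * U - t * U * V * V + t * U * U * V + t * G * V - t * G * U - t * g * V + t * g * U - t * s * g + t * s * g * U * V - t * s * g * G + t * t + t * t * V * V - 4 * t * t * U * V + t * t * U * U + t * t * U * U * V * V + t * t * G - t * t * G * U * V + t * t * g - t * t * g * U * V + t * t * g * G + t * t * s * V - t * t * s * U - t * t * s * U * V * V + t * t * s * U * U * V + t * t * s * G * V - t * t * s * G * U + t * t * t * V - t * t * t * U - t * t * t * U * V * V + t * t * t * U * U * V + t * t * t * g * V - t * t * t * g * U + t * t * t * s - 2 * t * t * t * s * U * V + t * t * t * s * U * U * V * V + t * t * t * s * G - t * t * t * s * G * U * V + t * t * t * s * g - t * t * t * s * g * U * V + t * t * t * s * g * G) * hst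
  · linear_combination h + (- g + g * U * V - g * G + t * V - t * U - t * U * V * V + t * U * U * V + t * G * V - t * G * U - t * g * V + t * g * U - t * s * g + t * s * g * U * V - t * s * g * G + t * t + t * t * V * V - 4 * t * t * U * V + t * t * U * U + t * t * U * U * V * V + t * t * G - t * t * G * U * V + t * t * g - t * t * g * U * V + t * t * g * G + t * t * s * V - t * t * s * U - t * t * s * U * V * V + t * t * s * U * U * V + t * t * s * G * V - t * t * s * G * U + t * t * t * V - t * t * t * U - t * t * t * U * V * V + t * t * t * U * U * V + t * t * t * g * V - t * t * t * g * U + t * t * t * s - 2 * t * t * t * s * U * V + t * t * t * s * U * U * V * V + t * t * t * s * G - t * t * t * s * G * U * V + t * t * t * s * g - t * t * t * s * g * U * V + t * t * t * s * g * G) * hst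

lemma coeff_star {u v : K} {f : K[T;T⁻¹]} (hf : SatStar u v f) (k : ℤ) :
    (f * invert f) (k - 2) - (f * invert f) k
      = (u * v - 1) * (f (2 - k) - f k) - (u - v) * (f (k - 1) - f (1 - k))
        + (u * v) * ((if (2:ℤ) = k then 1 else 0) - (if (0:ℤ) = k then 1 else 0)) := by
  have h := congrArg (fun p => p.coeff k) hf
  simpa only [sub_mul, one_mul, sub_app, add_app, C_mul_app, T_mul_app,
    invert_apply, T_apply, one_app, neg_sub] using h

section Support

variable {f : K[T;T⁻¹]} {N : ℤ}

lemma prod_app_eq_zero (hpos : ∀ n ∈ f.coeff.support, 0 < n)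
    (hmax : ∀ n ∈ f.coeff.support, n ≤ N) {k : ℤ} (hk : k ≤ -N) :
    (f * invert f) k = 0 := by
  rw [mul_app]
  refine Finset.sum_eq_zero fun a ha => ?_
  rw [invert_apply]
  have h1 : 0 < a := hpos a ha
  have h2 : f (-(k - a)) = 0 := by
    rw [← Finsupp.notMem_support_iff]
    intro hmem
    have := hmax _ hmem
    omega
  rw [h2, mul_zero]

lemma prod_app_one_sub (hpos : ∀ n ∈ f.coeff.support, 0 < n)
    (hmax : ∀ n ∈ f.coeff.support, n ≤ N) :
    (f * invert f) (1 - N) = f 1 * f N := by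
  rw [mul_app]
  have key : ∀ a ∈ f.coeff.support, f a * invert f (1 - N - a)
      = if a = 1 then f 1 * f N else 0 := by
    intro a ha
    rw [invert_apply]
    split_ifs with h
    · subst h; congr 1; congr 1; ring
    · have h1 : 0 < a := hpos a ha
      have h2 : f (-(1 - N - a)) = 0 := by
        rw [← Finsupp.notMem_support_iff]
        intro hmem
        have := hmax _ hmem
        omega
      rw [h2, mul_zero]
  rw [Finset.sum_congr rfl key, Finset.sum_ite_eq' f.coeff.support 1 (fun _ => f 1 * f N)]
  split_ifs with h
  · rfl
  · rw [Finsupp.notMem_support_iff.mp h, zero_mul]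

lemma prod_app_two_sub (hpos : ∀ n ∈ f.coeff.support, 0 < n)
    (hmax : ∀ n ∈ f.coeff.support, n ≤ N) :
    (f * invert f) (2 - N) = f 1 * f (N - 1) + f 2 * f N := by
  rw [mul_app]
  have key : ∀ a ∈ f.coeff.support, f a * invert f (2 - N - a)
      = (if a = 1 then f 1 * f (N - 1) else 0) + (if a = 2 then f 2 * f N else 0) := by
    intro a ha
    rw [invert_apply]
    by_cases ha1 : a = 1
    · subst ha1
      rw [if_pos rfl, if_neg (by norm_num), add_zero]
      congr 1
      congr 1
      ring
    · by_cases ha2 : a = 2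
      · subst ha2
        rw [if_neg (by norm_num), if_pos rfl, zero_add]
        congr 1
        congr 1
        ring
      · rw [if_neg ha1, if_neg ha2, add_zero]
        have h1 : 0 < a := hpos a ha
        have h2 : f (-(2 - N - a)) = 0 := by
          rw [← Finsupp.notMem_support_iff]
          intro hmem
          have := hmax _ hmem
          omega
        rw [h2, mul_zero]
  rw [Finset.sum_congr rfl key, Finset.sum_add_distrib,
    Finset.sum_ite_eq' f.coeff.support 1 (fun _ => f 1 * f (N - 1)),
    Finset.sum_ite_eq' f.coeff.support 2 (fun _ => f 2 * f N)]
  have e1 : (if 1 ∈ f.coeff.support then f 1 * f (N - 1) else 0) = f 1 * f (N - 1) := by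
    split_ifs with h
    · rfl
    · rw [Finsupp.notMem_support_iff.mp h, zero_mul]
  have e2 : (if 2 ∈ f.coeff.support then f 2 * f N else 0) = f 2 * f N := by
    split_ifs with h
    · rfl
    · rw [Finsupp.notMem_support_iff.mp h, zero_mul]
  rw [e1, e2]

lemma eq_single (h : ∀ m, m ≠ N → f m = 0) : f = C (f N) * T N := by
  ext k
  rw [C_mul_app, T_apply]
  by_cases hk : N = k
  · subst hk; simp
  · rw [if_neg hk, mul_zero, h k (fun hc => hk hc.symm)]

lemma eq_pair (h : ∀ m, m ≠ 1 → m ≠ 2 → f m = 0) :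
    f = C (f 1) * T 1 + C (f 2) * T 2 := by
  ext k
  rw [add_app, C_mul_app, C_mul_app, T_apply, T_apply]
  by_cases hk1 : k = 1
  · subst hk1; norm_num
  · by_cases hk2 : k = 2
    · subst hk2; norm_num
    · rw [if_neg (fun hc => hk1 hc.symm), if_neg (fun hc => hk2 hc.symm),
        mul_zero, mul_zero, add_zero, h k hk1 hk2]

end Support

lemma shift_Rpoly (u v : K) (d : ℕ) :
    T 2 * Rpoly u v d + C (u * v - 1) * T 2 + C (u - v) * T 1 = Rpoly u v (d + 1) := by
  rw [Rpoly, Rpoly]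
  simp only [Finset.sum_range_succ', Finset.mul_sum]
  have hbase : (C (u * v - 1) * T (2 * ((0:ℕ) : ℤ) + 2) + C (u - v) * T (2 * ((0:ℕ) : ℤ) + 1)
      : K[T;T⁻¹]) = C (u * v - 1) * T 2 + C (u - v) * T 1 := by norm_num
  have hterm : ∀ j ∈ Finset.range d,
      (C (u * v - 1) * T (2 * (((j:ℕ) + 1 : ℕ) : ℤ) + 2)
        + C (u - v) * T (2 * (((j:ℕ) + 1 : ℕ) : ℤ) + 1) : K[T;T⁻¹])
      = T 2 * (C (u * v - 1) * T (2 * (j : ℤ) + 2) + C (u - v) * T (2 * (j : ℤ) + 1)) := by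
    intro j _
    rw [mul_add, mul_left_comm, ← T_add, mul_left_comm (T 2), ← T_add]
    have e1 : 2 * (((j:ℕ) + 1 : ℕ) : ℤ) + 2 = 2 + (2 * (j : ℤ) + 2) := by push_cast; ring
    have e2 : 2 * (((j:ℕ) + 1 : ℕ) : ℤ) + 1 = 2 + (2 * (j : ℤ) + 1) := by push_cast; ring
    rw [e1, e2]
  rw [hbase, Finset.sum_congr rfl hterm]
  ring

lemma main (u v : K) (n : ℕ) : ∀ f : K[T;T⁻¹], SatStar u v f →
    (∀ k ∈ f.coeff.support, 0 < k) → (∀ k ∈ f.coeff.support, k ≤ (n : ℤ)) →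
    ∃ d : ℕ,
      f = -(C u) * T (2 * (d : ℤ) + 1) - Rpoly u v d ∨
      f = C v * T (2 * (d : ℤ) + 1) - Rpoly u v d ∨
      f = C (u * v) * T (2 * (d : ℤ)) - Rpoly u v d ∨
      f = -T (2 * (d : ℤ)) - Rpoly u v d := by
  induction n using Nat.strong_induction_on with
  | _ n ih =>
  intro f hf hpos hbd
  by_cases hf0 : f = 0
  · subst hf0
    refine ⟨0, Or.inr (Or.inr (Or.inl ?_))⟩
    have h0 : C (u * v) * (T 2 - 1) = (0 : K[T;T⁻¹]) := by
      have := hf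
      unfold SatStar at this
      simpa using this.symm
    have hT : (T 2 - 1 : K[T;T⁻¹]) ≠ 0 := by
      intro h
      have h2 : (T 2 - 1 : K[T;T⁻¹]).coeff 2 = (0 : K[T;T⁻¹]).coeff 2 := congrArg (fun p => p.coeff 2) h
      rw [sub_app, T_apply, one_app] at h2
      norm_num at h2
    have hC : C (u * v) = (0 : K[T;T⁻¹]) := by
      rcases mul_eq_zero.mp h0 with h | h
      · exact h
      · exact absurd h hT
    have huv : u * v = 0 := by
      have h2 : (C (u * v) : K[T;T⁻¹]) 0 = 0 := by rw [hC]; rfl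
      rwa [C_apply, if_pos rfl] at h2
    simp [Rpoly, huv]
  · have hne : f.coeff.support.Nonempty := Finsupp.support_nonempty_iff.mpr (AddMonoidAlgebra.coeff_eq_zero.not.mpr hf0)
    set N := f.coeff.support.max' hne with hNdef
    have hNmem : N ∈ f.coeff.support := Finset.max'_mem _ _
    have hNpos : 0 < N := hpos N hNmem
    have hNle : (N : ℤ) ≤ (n : ℤ) := hbd N hNmem
    have hfN : f N ≠ 0 := Finsupp.mem_support_iff.mp hNmem
    have hmax : ∀ m ∈ f.coeff.support, m ≤ N := fun m hm => Finset.le_max' _ m hm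
    have hzlt : ∀ m : ℤ, m ≤ 0 → f m = 0 := by
      intro m hm
      by_contra h
      exact absurd (hpos m (Finsupp.mem_support_iff.mpr h)) (by omega)
    have hzgt : ∀ m : ℤ, N < m → f m = 0 := by
      intro m hm
      by_contra h
      exact absurd (hmax m (Finsupp.mem_support_iff.mpr h)) (by omega)
    -- Equation at degree 1 - N
    have e1 := coeff_star hf (1 - N)
    rw [show (1 : ℤ) - N - 2 = -1 - N by ring] at e1
    rw [prod_app_eq_zero hpos hmax (by omega), prod_app_one_sub hpos hmax,
      show (2 : ℤ) - (1 - N) = N + 1 by ring,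
      show (1 : ℤ) - N - 1 = -N by ring,
      show (1 : ℤ) - (1 - N) = N by ring,
      hzgt (N + 1) (by omega), hzlt (1 - N) (by omega), hzlt (-N) (by omega),
      if_neg (show ¬ (2 : ℤ) = 1 - N by omega)] at e1
    by_cases hN1 : N = 1
    · -- base case, N = 1
      rw [if_pos (by omega)] at e1
      rw [hN1] at e1
      have hsingle : f = C (f 1) * T 1 := by
        rw [show (1:ℤ) = N by omega]
        exact eq_single (fun m hm => by
          rcases lt_or_gt_of_ne hm with h | h
          · exact hzlt m (by omega)
          · exact hzgt m h)
      have hquad : (f 1 + u) * (f 1 - v) = 0 := by linear_combination -e1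
      refine ⟨0, ?_⟩
      rcases mul_eq_zero.mp hquad with h | h
      · refine Or.inl ?_
        have : f 1 = -u := by linear_combination h
        rw [hsingle, this]
        simp [Rpoly, map_neg]
      · refine Or.inr (Or.inl ?_)
        have : f 1 = v := by linear_combination h
        rw [hsingle, this]
        simp [Rpoly]
    · -- now N ≥ 2 and f 1 = -(u - v)
      rw [if_neg (show ¬ (0 : ℤ) = 1 - N by omega)] at e1
      have h1 : f 1 = -(u - v) := by
        have hq : (f 1 + (u - v)) * f N = 0 := by linear_combination -e1
        rcases mul_eq_zero.mp hq with h | h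
        · linear_combination h
        · exact absurd h hfN
      -- Equation at degree 2 - N
      have e2 := coeff_star hf (2 - N)
      rw [show (2 : ℤ) - N - 2 = -N by ring] at e2
      rw [prod_app_eq_zero hpos hmax le_rfl, prod_app_two_sub hpos hmax,
        show (2 : ℤ) - (2 - N) = N by ring,
        show (2 : ℤ) - N - 1 = 1 - N by ring,
        show (1 : ℤ) - (2 - N) = N - 1 by ring,
        hzlt (2 - N) (by omega), hzlt (1 - N) (by omega),
        if_neg (show ¬ (2 : ℤ) = 2 - N by omega)] at e2
      by_cases hN2 : N = 2
      · -- base case, N = 2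
        rw [if_pos (by omega)] at e2
        rw [hN2, show (2 : ℤ) - 1 = 1 by ring] at e2
        have hpair : f = C (f 1) * T 1 + C (f 2) * T 2 := by
          refine eq_pair (fun m hm1 hm2 => ?_)
          rcases le_or_gt m 0 with h | h
          · exact hzlt m h
          · exact hzgt m (by omega)
        have hquad : (f 2 - 1) * (f 2 + u * v) = 0 := by
          linear_combination -e2 - f 1 * h1
        refine ⟨1, ?_⟩
        rcases mul_eq_zero.mp hquad with h | h
        · refine Or.inr (Or.inr (Or.inl ?_))
          have h2v : f 2 = 1 := by linear_combination h
          rw [hpair, h1, h2v, Rpoly]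
          rw [Finset.sum_range_one]
          simp only [Nat.cast_zero, mul_zero, zero_add, Nat.cast_one, mul_one]
          simp only [map_sub, map_neg, map_mul, map_one]
          ring
        · refine Or.inr (Or.inr (Or.inr ?_))
          have h2v : f 2 = -(u * v) := by linear_combination h
          rw [hpair, h1, h2v, Rpoly]
          rw [Finset.sum_range_one]
          simp only [Nat.cast_zero, mul_zero, zero_add, Nat.cast_one, mul_one]
          simp only [map_sub, map_neg, map_mul, map_one]
          ring
      · -- inductive step, N ≥ 3
        have hN3 : 3 ≤ N := by omega
        rw [if_neg (show ¬ (0 : ℤ) = 2 - N by omega)] at e2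
        have h2 : f 2 = -(u * v - 1) := by
          have hq : (f 2 + (u * v - 1)) * f N = 0 := by
            linear_combination -e2 - f (N - 1) * h1
          rcases mul_eq_zero.mp hq with h | h
          · linear_combination h
          · exact absurd h hfN
        set g : K[T;T⁻¹] := T (-2) * (f + C (u * v - 1) * T 2 + C (u - v) * T 1) with hgdef
        have hfg : T 2 * g = f + C (u * v - 1) * T 2 + C (u - v) * T 1 := by
          rw [hgdef, ← mul_assoc, ← T_add]
          norm_num
        have hfPhi : f = T 2 * g - C (u * v - 1) * T 2 - C (u - v) * T 1 := by
          rw [hfg]; ring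
        have hg : SatStar u v g := by
          rw [← star_shift u v g, ← hfPhi]
          exact hf
        have hgapp : ∀ k : ℤ, g k = f (k + 2) + (if k = 0 then u * v - 1 else 0)
            + (if k = -1 then u - v else 0) := by
          intro k
          rw [hgdef, T_mul_app, show k - (-2) = k + 2 by ring, add_app, add_app,
            C_mul_app, C_mul_app, T_apply, T_apply]
          split_ifs <;> first | (exfalso; omega) | ring
        have hgpos : ∀ k ∈ g.coeff.support, 0 < k := by
          intro k hk
          by_contra hc
          push_neg at hc
          refine Finsupp.mem_support_iff.mp hk ?_
          rw [hgapp k]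
          rcases eq_or_lt_of_le hc with h | h
          · subst h
            norm_num [h2]
          · by_cases hk1 : k = -1
            · rw [hk1]
              norm_num [h1]
            · rw [if_neg (by omega), if_neg hk1, hzlt (k + 2) (by omega)]
              ring
        have hgbd : ∀ k ∈ g.coeff.support, k ≤ ((n - 2 : ℕ) : ℤ) := by
          intro k hk
          have hkpos := hgpos k hk
          have hgk := Finsupp.mem_support_iff.mp hk
          rw [hgapp k, if_neg (by omega), if_neg (by omega), add_zero, add_zero] at hgk
          have : k + 2 ≤ N := hmax _ (Finsupp.mem_support_iff.mpr hgk)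
          omega
        obtain ⟨d, hd⟩ := ih (n - 2) (by omega) g hg hgpos hgbd
        refine ⟨d + 1, ?_⟩
        have hTodd : (T (2 * ((d : ℤ) + 1) + 1) : K[T;T⁻¹]) = T 2 * T (2 * (d : ℤ) + 1) := by
          rw [← T_add]; congr 1; ring
        have hTeven : (T (2 * ((d : ℤ) + 1)) : K[T;T⁻¹]) = T 2 * T (2 * (d : ℤ)) := by
          rw [← T_add]; congr 1; ring
        rcases hd with h | h | h | h
        · refine Or.inl ?_
          rw [hfPhi, h, ← shift_Rpoly u v d]
          push_cast
          rw [hTodd]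
          ring
        · refine Or.inr (Or.inl ?_)
          rw [hfPhi, h, ← shift_Rpoly u v d]
          push_cast
          rw [hTodd]
          ring
        · refine Or.inr (Or.inr (Or.inl ?_))
          rw [hfPhi, h, ← shift_Rpoly u v d]
          push_cast
          rw [hTeven]
          ring
        · refine Or.inr (Or.inr (Or.inr ?_))
          rw [hfPhi, h, ← shift_Rpoly u v d]
          push_cast
          rw [hTeven]
          ring

end Stmt9

/-- A solution of (★) supported in strictly positive degrees belongs to one of
the four families (iv)–(vi) of Lemma 3.4 of the paper. -/
theorem statement9 {K : Type*} [Field K] (u v : K) (f : K[T;T⁻¹])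
    (hf : SatStar u v f) (hsupp : ∀ n ∈ f.coeff.support, 0 < n) :
    ∃ d : ℕ,
      f = -(C u) * T (2 * (d : ℤ) + 1) - Rpoly u v d ∨
      f = C v * T (2 * (d : ℤ) + 1) - Rpoly u v d ∨
      f = C (u * v) * T (2 * (d : ℤ)) - Rpoly u v d ∨
      f = -T (2 * (d : ℤ)) - Rpoly u v d := by
  by_cases hf0 : f = 0
  · refine Stmt9.main u v 0 f hf hsupp ?_
    intro k hk
    rw [hf0] at hk
    simp at hk
  · have hne : f.coeff.support.Nonempty :=
      Finsupp.support_nonempty_iff.mpr (AddMonoidAlgebra.coeff_eq_zero.not.mpr hf0)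
    refine Stmt9.main u v (f.coeff.support.max' hne).toNat f hf hsupp ?_
    intro k hk
    have h1 : k ≤ f.coeff.support.max' hne := Finset.le_max' _ k hk
    have h2 : 0 < f.coeff.support.max' hne := hsupp _ (Finset.max'_mem _ _)
    omega
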